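/- Let (X, d) be a metric space, let {B_i}_{i∈I} be a cover of X by pairwise disjoint nonempty clopen subsets, let p_i ∈ B_i for each i, let e_i be a metric on B_i generating the subspace topology of B_i, and let h be a metric on the set P = {p_i : i ∈ I} generating the discrete topology on P. Define D : X × X → [0,∞) by D(x,y) = e_i(x,y) if x, y ∈ B_i, and D(x,y) = e_i(x, p_i) + h(p_i, p_j) + e_j(p_j, y) if x ∈ B_i, y ∈ B_j with i ≠ j. Then D is a metric on X generating the topology of X, and D restricted to B_i × B_i equals e_i for every i. Moreover, if ε > 0 is such that for every i the diameter of B_i with respect to d is at most ε and the diameter of B_i with respect to e_i is at most ε, then sup_{x,y∈X} |D(x,y) − d(x,y)| ≤ 4ε + sup_{i,j∈I} |d(p_i, p_j) − h(p_i, p_j)|. -/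
import Mathlib


open Set
open scoped ENNReal

/-- The space `Met(X)` of metrics generating the topology of `X`. -/
def MetricCompat (X : Type*) [t : TopologicalSpace X] : Type _ :=
  { m : MetricSpace X // m.toUniformSpace.toTopologicalSpace = t }

namespace MetricCompat

variable {X : Type*} [TopologicalSpace X]

/-- The distance function of an element of `Met(X)`. -/
noncomputable def dist (d : MetricCompat X) (x y : X) : ℝ := d.1.dist x y

/-- The supremum distance `D_X`, valued in `[0,∞]`. -/
noncomputable def supDist (d e : MetricCompat X) : ℝ≥0∞ :=
  ⨆ p : X × X, ENNReal.ofReal |d.dist p.1 p.2 - e.dist p.1 p.2|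

/-- The topology on `Met(X)` induced by the open balls of `D_X`. -/
noncomputable instance : TopologicalSpace (MetricCompat X) :=
  TopologicalSpace.generateFrom
    { U | ∃ (d : MetricCompat X) (r : ℝ≥0∞), 0 < r ∧ U = { e | supDist d e < r } }

end MetricCompat

/-- A space is strongly `0`-dimensional if disjoint closed sets are separated by a clopen set. -/
def StronglyZeroDim (X : Type*) [TopologicalSpace X] : Prop :=
  ∀ A B : Set X, IsClosed A → IsClosed B → Disjoint A B →
    ∃ V : Set X, IsClopen V ∧ A ⊆ V ∧ Disjoint V B

section Helpers

variable {Y : Type*} [TopologicalSpace Y]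

private lemma mcd_nonneg (m : MetricCompat Y) (a b : Y) : 0 ≤ m.dist a b :=
  @dist_nonneg _ m.1.toPseudoMetricSpace a b

private lemma mcd_comm (m : MetricCompat Y) (a b : Y) : m.dist a b = m.dist b a :=
  m.1.dist_comm a b

private lemma mcd_self (m : MetricCompat Y) (a : Y) : m.dist a a = 0 :=
  m.1.dist_self a

private lemma mcd_triangle (m : MetricCompat Y) (a b c : Y) :
    m.dist a c ≤ m.dist a b + m.dist b c :=
  m.1.dist_triangle a b c

private lemma mcd_eq_zero (m : MetricCompat Y) {a b : Y} (h : m.dist a b = 0) : a = b :=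
  m.1.eq_of_dist_eq_zero h

private lemma mcd_exists_ball (m : MetricCompat Y) {s : Set Y} (hs : IsOpen s) {x : Y}
    (hx : x ∈ s) : ∃ ε > 0, ∀ y, m.dist x y < ε → y ∈ s := by
  rw [← m.2] at hs
  rw [@Metric.isOpen_iff Y m.1.toPseudoMetricSpace] at hs
  obtain ⟨ε, hε, hb⟩ := hs x hx
  exact ⟨ε, hε, fun y hy => hb (by show m.1.dist y x < ε; rw [m.1.dist_comm]; exact hy)⟩

private lemma mcd_ball_open (m : MetricCompat Y) (x : Y) (ε : ℝ) :
    IsOpen {y : Y | m.dist x y < ε} := by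
  have h1 : {y : Y | m.dist x y < ε} = @Metric.ball Y m.1.toPseudoMetricSpace x ε := by
    ext y
    show m.1.dist x y < ε ↔ m.1.dist y x < ε
    rw [m.1.dist_comm]
  have h2 : @IsOpen Y m.1.toUniformSpace.toTopologicalSpace {y : Y | m.dist x y < ε} := by
    rw [h1]; exact @Metric.isOpen_ball Y m.1.toPseudoMetricSpace x ε
  rwa [m.2] at h2

private lemma discrete_sep {Z : Type*} (m : MetricSpace Z)
    (hm : m.toUniformSpace.toTopologicalSpace = ⊥) (y : Z) :
    ∃ r > 0, ∀ z, z ≠ y → r ≤ m.dist y z := by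
  have hop : @IsOpen Z m.toUniformSpace.toTopologicalSpace {y} := by
    rw [hm]; exact trivial
  rw [@Metric.isOpen_singleton_iff Z m.toPseudoMetricSpace] at hop
  obtain ⟨ε, hε, hb⟩ := hop
  exact ⟨ε, hε, fun z hz => by
    by_contra hc
    exact hz (hb z (by rw [m.dist_comm]; linarith))⟩

end Helpers

/-- Proposition 2.1 (amalgamation of metrics): given a cover of a metric space `(X, d)` by
pairwise disjoint nonempty clopen sets `B i`, points `p i ∈ B i`, metrics `e i` generating the
subspace topology of `B i`, and a metric `h` on `P = {p i}` generating the discrete topology,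
the amalgam `D` is a metric generating the topology of `X` which restricts to `e i` on each
`B i`, and if each `B i` has `d`-diameter and `e i`-diameter at most `ε`, then
`D_X(D, d) ≤ 4ε + D_P(d|_P, h)`. -/
theorem amalgamation_of_metrics
    {X : Type*} [MetricSpace X] {I : Type*}
    (B : I → Set X) (hBcover : ⋃ i, B i = Set.univ)
    (hBdisj : Pairwise (Function.onFun Disjoint B))
    (hBne : ∀ i, (B i).Nonempty)
    (hBclopen : ∀ i, IsClopen (B i))
    (p : I → X) (hp : ∀ i, p i ∈ B i)
    (e : ∀ i, MetricCompat (B i))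
    (h : MetricSpace (Set.range p))
    (hdisc : h.toUniformSpace.toTopologicalSpace = ⊥)
    (D : X → X → ℝ)
    (hD1 : ∀ (i : I) (x y : X) (hx : x ∈ B i) (hy : y ∈ B i),
      D x y = (e i).dist ⟨x, hx⟩ ⟨y, hy⟩)
    (hD2 : ∀ (i j : I), i ≠ j → ∀ (x y : X) (hx : x ∈ B i) (hy : y ∈ B j),
      D x y = (e i).dist ⟨x, hx⟩ ⟨p i, hp i⟩
        + h.dist ⟨p i, Set.mem_range_self i⟩ ⟨p j, Set.mem_range_self j⟩
        + (e j).dist ⟨p j, hp j⟩ ⟨y, hy⟩) :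
    (∃ m : MetricCompat X, ∀ x y : X, m.dist x y = D x y) ∧
    (∀ (i : I) (x y : X) (hx : x ∈ B i) (hy : y ∈ B i),
      D x y = (e i).dist ⟨x, hx⟩ ⟨y, hy⟩) ∧
    (∀ ε : ℝ, 0 < ε →
      (∀ i : I, ∀ x ∈ B i, ∀ y ∈ B i, dist x y ≤ ε) →
      (∀ (i : I) (x y : B i), (e i).dist x y ≤ ε) →
      (⨆ q : X × X, ENNReal.ofReal |D q.1 q.2 - dist q.1 q.2|) ≤
        ENNReal.ofReal (4 * ε) +
          ⨆ (i : I) (j : I), ENNReal.ofReal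
            |dist (p i) (p j) -
              h.dist ⟨p i, Set.mem_range_self i⟩ ⟨p j, Set.mem_range_self j⟩|) := by
  classical
  have hex : ∀ x : X, ∃ i, x ∈ B i := fun x =>
    Set.mem_iUnion.1 (hBcover ▸ Set.mem_univ x)
  choose ix hix using hex
  have huniq : ∀ {i j : I} {x : X}, x ∈ B i → x ∈ B j → i = j := by
    intro i j x hxi hxj
    by_contra hij
    exact Set.disjoint_left.1 (hBdisj hij) hxi hxj
  have hnonneg : ∀ (a b : Set.range p), 0 ≤ h.dist a b := fun a b =>
    @dist_nonneg _ h.toPseudoMetricSpace a b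
  -- metric axioms
  have dself : ∀ x : X, D x x = 0 := by
    intro x
    rw [hD1 (ix x) x x (hix x) (hix x)]
    exact mcd_self _ _
  have dcomm : ∀ x y : X, D x y = D y x := by
    intro x y
    by_cases hij : ix x = ix y
    · have hyB : y ∈ B (ix x) := hij ▸ hix y
      rw [hD1 (ix x) x y (hix x) hyB, hD1 (ix x) y x hyB (hix x)]
      exact mcd_comm _ _ _
    · rw [hD2 (ix x) (ix y) hij x y (hix x) (hix y),
        hD2 (ix y) (ix x) (Ne.symm hij) y x (hix y) (hix x)]
      rw [mcd_comm (e (ix x)), mcd_comm (e (ix y)), h.dist_comm]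
      ring
  have dtri : ∀ x y z : X, D x z ≤ D x y + D y z := by
    intro x y z
    by_cases hxy : ix x = ix y <;> by_cases hyz : ix y = ix z
    · have hyB : y ∈ B (ix x) := hxy ▸ hix y
      have hzB : z ∈ B (ix x) := (hxy.trans hyz) ▸ hix z
      rw [hD1 (ix x) x z (hix x) hzB, hD1 (ix x) x y (hix x) hyB,
        hD1 (ix x) y z hyB hzB]
      exact mcd_triangle _ _ _ _
    · have hxz : ix x ≠ ix z := fun hc => hyz (hxy ▸ hc)
      have hyB : y ∈ B (ix x) := hxy ▸ hix y
      rw [hD2 (ix x) (ix z) hxz x z (hix x) (hix z),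
        hD1 (ix x) x y (hix x) hyB,
        hD2 (ix x) (ix z) hxz y z hyB (hix z)]
      have ht := mcd_triangle (e (ix x)) ⟨x, hix x⟩ ⟨y, hyB⟩ ⟨p (ix x), hp (ix x)⟩
      linarith
    · have hxz : ix x ≠ ix z := fun hc => hxy (hc.trans hyz.symm)
      have hyB : y ∈ B (ix z) := hyz ▸ hix y
      rw [hD2 (ix x) (ix z) hxz x z (hix x) (hix z),
        hD2 (ix x) (ix z) hxz x y (hix x) hyB,
        hD1 (ix z) y z hyB (hix z)]
      have ht := mcd_triangle (e (ix z)) ⟨p (ix z), hp (ix z)⟩ ⟨y, hyB⟩ ⟨z, hix z⟩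
      linarith
    · by_cases hxz : ix x = ix z
      · have hzB : z ∈ B (ix x) := hxz ▸ hix z
        rw [hD1 (ix x) x z (hix x) hzB,
          hD2 (ix x) (ix y) hxy x y (hix x) (hix y),
          hD2 (ix y) (ix x) (Ne.symm hxy) y z (hix y) hzB]
        have ht := mcd_triangle (e (ix x)) ⟨x, hix x⟩ ⟨p (ix x), hp (ix x)⟩ ⟨z, hzB⟩
        have h1 := hnonneg ⟨p (ix x), Set.mem_range_self _⟩ ⟨p (ix y), Set.mem_range_self _⟩
        have h2 := hnonneg ⟨p (ix y), Set.mem_range_self _⟩ ⟨p (ix x), Set.mem_range_self _⟩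
        have h3 := mcd_nonneg (e (ix y)) ⟨p (ix y), hp (ix y)⟩ ⟨y, hix y⟩
        have h4 := mcd_nonneg (e (ix y)) ⟨y, hix y⟩ ⟨p (ix y), hp (ix y)⟩
        linarith
      · rw [hD2 (ix x) (ix z) hxz x z (hix x) (hix z),
          hD2 (ix x) (ix y) hxy x y (hix x) (hix y),
          hD2 (ix y) (ix z) hyz y z (hix y) (hix z)]
        have ht : h.dist ⟨p (ix x), Set.mem_range_self _⟩ ⟨p (ix z), Set.mem_range_self _⟩ ≤
            h.dist ⟨p (ix x), Set.mem_range_self _⟩ ⟨p (ix y), Set.mem_range_self _⟩ +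
            h.dist ⟨p (ix y), Set.mem_range_self _⟩ ⟨p (ix z), Set.mem_range_self _⟩ :=
          h.dist_triangle _ _ _
        have h3 := mcd_nonneg (e (ix y)) ⟨p (ix y), hp (ix y)⟩ ⟨y, hix y⟩
        have h4 := mcd_nonneg (e (ix y)) ⟨y, hix y⟩ ⟨p (ix y), hp (ix y)⟩
        linarith
  have deqz : ∀ x y : X, D x y = 0 → x = y := by
    intro x y h0
    by_cases hij : ix x = ix y
    · have hyB : y ∈ B (ix x) := hij ▸ hix y
      rw [hD1 (ix x) x y (hix x) hyB] at h0
      exact congrArg Subtype.val (mcd_eq_zero (e (ix x)) h0)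
    · exfalso
      rw [hD2 (ix x) (ix y) hij x y (hix x) (hix y)] at h0
      have hpne : (⟨p (ix x), Set.mem_range_self _⟩ : Set.range p) ≠
          ⟨p (ix y), Set.mem_range_self _⟩ := by
        intro hc
        have hval : p (ix x) = p (ix y) := congrArg Subtype.val hc
        have : p (ix x) ∈ B (ix y) := hval ▸ hp (ix y)
        exact hij (huniq (hp (ix x)) this)
      have hpospt : 0 < h.dist ⟨p (ix x), Set.mem_range_self _⟩
          ⟨p (ix y), Set.mem_range_self _⟩ := (@dist_pos _ h _ _).2 hpne
      have h1 := mcd_nonneg (e (ix x)) ⟨x, hix x⟩ ⟨p (ix x), hp (ix x)⟩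
      have h2 := mcd_nonneg (e (ix y)) ⟨p (ix y), hp (ix y)⟩ ⟨y, hix y⟩
      linarith
  -- separation radius for h
  have hsep : ∀ i : I, ∃ r > 0, ∀ j : I, j ≠ i →
      r ≤ h.dist ⟨p i, Set.mem_range_self i⟩ ⟨p j, Set.mem_range_self j⟩ := by
    intro i
    obtain ⟨r, hr, hb⟩ := discrete_sep h hdisc ⟨p i, Set.mem_range_self i⟩
    refine ⟨r, hr, fun j hj => hb _ fun hc => hj ?_⟩
    have hval : p j = p i := congrArg Subtype.val hc
    have : p j ∈ B i := hval ▸ hp i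
    exact huniq (hp j) this
  -- topology characterization
  have H : ∀ s : Set X, IsOpen s ↔ ∀ x ∈ s, ∃ ε > 0, ∀ y, D x y < ε → y ∈ s := by
    intro s
    constructor
    · intro hs x hx
      have hsub : IsOpen ((Subtype.val : B (ix x) → X) ⁻¹' s) :=
        hs.preimage continuous_subtype_val
      obtain ⟨ε, hε, hb⟩ := mcd_exists_ball (e (ix x)) hsub
        (show (⟨x, hix x⟩ : B (ix x)) ∈ _ from hx)
      obtain ⟨r, hr, hrle⟩ := hsep (ix x)
      refine ⟨min ε r, lt_min hε hr, fun y hy => ?_⟩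
      by_cases hij : ix y = ix x
      · have hyB : y ∈ B (ix x) := hij ▸ hix y
        rw [hD1 (ix x) x y (hix x) hyB] at hy
        exact hb ⟨y, hyB⟩ (lt_of_lt_of_le hy (min_le_left _ _))
      · exfalso
        rw [hD2 (ix x) (ix y) (Ne.symm hij) x y (hix x) (hix y)] at hy
        have h1 := mcd_nonneg (e (ix x)) ⟨x, hix x⟩ ⟨p (ix x), hp (ix x)⟩
        have h2 := mcd_nonneg (e (ix y)) ⟨p (ix y), hp (ix y)⟩ ⟨y, hix y⟩
        have h3 := hrle (ix y) hij
        have h4 : min ε r ≤ r := min_le_right _ _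
        linarith
    · intro hball
      rw [isOpen_iff_mem_nhds]
      intro x hx
      obtain ⟨ε, hε, hb⟩ := hball x hx
      refine mem_nhds_iff.2
        ⟨Subtype.val '' {y : B (ix x) | (e (ix x)).dist ⟨x, hix x⟩ y < ε}, ?_, ?_, ?_⟩
      · rintro _ ⟨y, hy, rfl⟩
        exact hb _ (by rw [hD1 (ix x) x y (hix x) y.2]; exact hy)
      · exact ((hBclopen (ix x)).2.isOpenMap_subtype_val) _
          (mcd_ball_open (e (ix x)) ⟨x, hix x⟩ ε)
      · exact ⟨⟨x, hix x⟩, by simpa [mcd_self (e (ix x))] using hε, rfl⟩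
  refine ⟨⟨⟨MetricSpace.ofDistTopology D dself dcomm dtri H deqz, rfl⟩,
    fun x y => rfl⟩, hD1, ?_⟩
  -- the quantitative estimate
  intro ε hε hdiam hediam
  refine iSup_le fun q => ?_
  obtain ⟨x, y⟩ := q
  show ENNReal.ofReal |D x y - dist x y| ≤ _
  by_cases hij : ix x = ix y
  · have hyB : y ∈ B (ix x) := hij ▸ hix y
    rw [hD1 (ix x) x y (hix x) hyB]
    have h1 : |(e (ix x)).dist ⟨x, hix x⟩ ⟨y, hyB⟩ - dist x y| ≤ 4 * ε := by
      have he := hediam (ix x) ⟨x, hix x⟩ ⟨y, hyB⟩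
      have hd := hdiam (ix x) x (hix x) y hyB
      have h2 := mcd_nonneg (e (ix x)) ⟨x, hix x⟩ ⟨y, hyB⟩
      have h3 := dist_nonneg (x := x) (y := y)
      rw [abs_le]
      constructor <;> linarith
    calc ENNReal.ofReal |(e (ix x)).dist ⟨x, hix x⟩ ⟨y, hyB⟩ - dist x y|
        ≤ ENNReal.ofReal (4 * ε) := ENNReal.ofReal_le_ofReal h1
      _ ≤ _ := le_self_add
  · rw [hD2 (ix x) (ix y) hij x y (hix x) (hix y)]
    set t := |dist (p (ix x)) (p (ix y)) -
      h.dist ⟨p (ix x), Set.mem_range_self _⟩ ⟨p (ix y), Set.mem_range_self _⟩| with ht_def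
    have key : |(e (ix x)).dist ⟨x, hix x⟩ ⟨p (ix x), hp (ix x)⟩
        + h.dist ⟨p (ix x), Set.mem_range_self _⟩ ⟨p (ix y), Set.mem_range_self _⟩
        + (e (ix y)).dist ⟨p (ix y), hp (ix y)⟩ ⟨y, hix y⟩ - dist x y| ≤ 4 * ε + t := by
      have ha0 := mcd_nonneg (e (ix x)) ⟨x, hix x⟩ ⟨p (ix x), hp (ix x)⟩
      have ha := hediam (ix x) ⟨x, hix x⟩ ⟨p (ix x), hp (ix x)⟩
      have hc0 := mcd_nonneg (e (ix y)) ⟨p (ix y), hp (ix y)⟩ ⟨y, hix y⟩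
      have hc := hediam (ix y) ⟨p (ix y), hp (ix y)⟩ ⟨y, hix y⟩
      have habs := abs_le.1 (le_refl t)
      rw [ht_def] at habs
      obtain ⟨habs1, habs2⟩ := habs
      have htr1 : dist x y ≤ dist x (p (ix x)) + dist (p (ix x)) (p (ix y))
          + dist (p (ix y)) y := dist_triangle4 x (p (ix x)) (p (ix y)) y
      have htr2 : dist (p (ix x)) (p (ix y)) ≤ dist (p (ix x)) x + dist x y
          + dist y (p (ix y)) := dist_triangle4 (p (ix x)) x y (p (ix y))
      have hb1 : dist x (p (ix x)) ≤ ε := hdiam (ix x) x (hix x) (p (ix x)) (hp (ix x))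
      have hb2 : dist (p (ix y)) y ≤ ε := hdiam (ix y) (p (ix y)) (hp (ix y)) y (hix y)
      have hb3 : dist (p (ix x)) x ≤ ε := hdiam (ix x) (p (ix x)) (hp (ix x)) x (hix x)
      have hb4 : dist y (p (ix y)) ≤ ε := hdiam (ix y) y (hix y) (p (ix y)) (hp (ix y))
      rw [abs_le]
      constructor <;> linarith
    refine le_trans (ENNReal.ofReal_le_ofReal key) ?_
    rw [ENNReal.ofReal_add (by positivity) (abs_nonneg _)]
    refine add_le_add le_rfl ?_
    exact le_iSup₂ (f := fun i j => ENNReal.ofReal |dist (p i) (p j) -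
      h.dist ⟨p i, Set.mem_range_self i⟩ ⟨p j, Set.mem_range_self j⟩|) (ix x) (ix y)
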